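/- Let r ∈ (0,1), λ > 0 with R = (r/(1-r))·e^λ > 1, and let x > 0 be a non-integer real and y > 0. Then there is no probability measure μ on ℝ whose Laplace transform satisfies ∫ e^{θt} dμ(t) = (1-r+r·e^θ)^x · (λ/(λ-θ))^y for all θ < λ. -/

import Mathlib

open MeasureTheory Real Filter Metric Complex

lemma laplace_integrable_complex {μ : Measure ℝ} {l : ℝ}
    (hInt : ∀ θ : ℝ, θ < l → Integrable (fun t => Real.exp (θ * t)) μ)
    {z : ℂ} (hz : z.re < l) :
    Integrable (fun t : ℝ => Complex.exp (z * t)) μ := by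
  refine (hInt z.re hz).mono ?_ (.of_forall fun t => ?_)
  · exact (Complex.continuous_exp.comp (continuous_const.mul Complex.continuous_ofReal)).aestronglyMeasurable
  · have : ‖Complex.exp (z * t)‖ = Real.exp (z.re * t) := by
      rw [Complex.norm_exp]
      congr 1
      simp [Complex.mul_re]
    rw [this, Real.norm_eq_abs, Real.abs_exp]

lemma laplace_hasDerivAt {μ : Measure ℝ} {l : ℝ}
    (hInt : ∀ θ : ℝ, θ < l → Integrable (fun t => Real.exp (θ * t)) μ)
    {z : ℂ} (hz : z.re < l) :
    HasDerivAt (fun w : ℂ => ∫ t, Complex.exp (w * t) ∂μ)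
      (∫ t, (t : ℂ) * Complex.exp (z * t) ∂μ) z := by
  set a := z.re with ha
  set ε : ℝ := (l - a) / 3 with hε
  have hε0 : 0 < ε := by simp [hε]; linarith
  have key := hasDerivAt_integral_of_dominated_loc_of_deriv_le (μ := μ)
    (F := fun (w : ℂ) (t : ℝ) => Complex.exp (w * t))
    (F' := fun (w : ℂ) (t : ℝ) => (t : ℂ) * Complex.exp (w * t))
    (x₀ := z)
    (bound := fun t : ℝ => ε⁻¹ * (Real.exp ((a + 2*ε) * t) + Real.exp (a * t) +
        Real.exp (a * t) + Real.exp ((a - 2*ε) * t)))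
    (ball_mem_nhds z hε0) ?_ ?_ ?_ ?_ ?_ ?_
  · exact key.2
  · exact .of_forall fun w =>
      (Complex.continuous_exp.comp (continuous_const.mul Complex.continuous_ofReal)).aestronglyMeasurable
  · exact laplace_integrable_complex hInt hz
  · exact (Complex.continuous_ofReal.mul
      (Complex.continuous_exp.comp (continuous_const.mul Complex.continuous_ofReal))).aestronglyMeasurable
  · refine .of_forall fun t => fun w hw => ?_
    have hre : |w.re - a| < ε := by
      calc |w.re - a| = |(w - z).re| := by rw [ha]; simp
        _ ≤ ‖w - z‖ := Complex.abs_re_le_norm _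
        _ < ε := by rwa [mem_ball, Complex.dist_eq] at hw
    have h2 : Real.exp (w.re * t) ≤ Real.exp ((a + ε) * t) + Real.exp ((a - ε) * t) := by
      rcases le_or_gt 0 t with ht | ht
      · have : Real.exp (w.re * t) ≤ Real.exp ((a + ε) * t) := by
          apply Real.exp_le_exp.2
          nlinarith [abs_lt.1 hre]
        linarith [Real.exp_pos ((a - ε) * t)]
      · have : Real.exp (w.re * t) ≤ Real.exp ((a - ε) * t) := by
          apply Real.exp_le_exp.2
          nlinarith [abs_lt.1 hre]
        linarith [Real.exp_pos ((a + ε) * t)]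
    have h3 : |t| ≤ ε⁻¹ * (Real.exp (ε * t) + Real.exp (-(ε * t))) := by
      rw [inv_mul_eq_div, le_div_iff₀ hε0]
      have h4 : ε * |t| ≤ Real.exp (ε * |t|) := by
        linarith [Real.add_one_le_exp (ε * |t|)]
      rcases le_or_gt 0 t with ht | ht
      · rw [_root_.abs_of_nonneg ht] at h4 ⊢
        have := Real.exp_pos (-(ε * t))
        nlinarith
      · rw [_root_.abs_of_neg ht] at h4 ⊢
        have h5 : rexp (ε * -t) = rexp (-(ε * t)) := by ring_nf
        rw [h5] at h4
        have := Real.exp_pos (ε * t)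
        nlinarith
    have hnorm : ‖(t : ℂ) * Complex.exp (w * t)‖ = |t| * Real.exp (w.re * t) := by
      rw [norm_mul, Complex.norm_real, Real.norm_eq_abs,
        Complex.norm_exp]
      congr 2
      simp [Complex.mul_re]
    rw [hnorm]
    calc |t| * Real.exp (w.re * t)
        ≤ (ε⁻¹ * (Real.exp (ε * t) + Real.exp (-(ε * t)))) *
          (Real.exp ((a + ε) * t) + Real.exp ((a - ε) * t)) := by
          apply mul_le_mul h3 h2 (Real.exp_pos _).le
          positivity
      _ = ε⁻¹ * (Real.exp ((a + 2*ε) * t) + Real.exp (a * t) +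
          Real.exp (a * t) + Real.exp ((a - 2*ε) * t)) := by
          rw [mul_assoc]
          congr 1
          rw [add_mul, mul_add, mul_add, ← Real.exp_add, ← Real.exp_add, ← Real.exp_add,
            ← Real.exp_add]
          rw [show ε * t + (a + ε) * t = (a + 2*ε) * t by ring,
            show ε * t + (a - ε) * t = a * t by ring,
            show -(ε * t) + (a + ε) * t = a * t by ring,
            show -(ε * t) + (a - ε) * t = (a - 2*ε) * t by ring]
          ring
  · refine Integrable.const_mul ?_ _
    have e1 : a + 2*ε < l := by rw [hε]; linarith
    have e2 : a < l := hz
    have e3 : a - 2*ε < l := by rw [hε]; linarith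
    exact (((hInt _ e1).add (hInt _ e2)).add (hInt _ e2)).add (hInt _ e3)
  · refine .of_forall fun t => fun w _ => ?_
    have := (hasDerivAt_mul_const (t : ℂ) (x := w)).cexp
    simpa [mul_comm] using this


theorem no_fractional_power_R_gt_one
    (r l x y : ℝ) (hr : r ∈ Set.Ioo (0:ℝ) 1) (hl : 0 < l)
    (hR : 1 < r / (1 - r) * Real.exp l)
    (hx : 0 < x) (hxnotint : ∀ n : ℤ, x ≠ n) (hy : 0 < y) :
    ¬ ∃ μ : Measure ℝ, IsProbabilityMeasure μ ∧
      ∀ θ : ℝ, θ < l →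
        ∫⁻ t, ENNReal.ofReal (Real.exp (θ * t)) ∂μ =
          ENNReal.ofReal ((1 - r + r * Real.exp θ) ^ x * (l / (l - θ)) ^ y) := by
  rintro ⟨μ, hprob, hLT⟩
  obtain ⟨hr0, hr1⟩ := hr
  have hr1' : 0 < 1 - r := by linarith
  have hA : ∀ θ : ℝ, 0 < 1 - r + r * Real.exp θ := fun θ => by
    have := Real.exp_pos θ; nlinarith
  have hC : ∀ θ : ℝ, θ < l → 0 < (1 - r + r * Real.exp θ) ^ x * (l / (l - θ)) ^ y := by
    intro θ hθ
    have h1 : 0 < l / (l - θ) := by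
      apply div_pos hl; linarith
    have h2 := hA θ
    positivity
  -- integrability
  have hInt : ∀ θ : ℝ, θ < l → Integrable (fun t => Real.exp (θ * t)) μ := by
    intro θ hθ
    constructor
    · exact (by fun_prop : Continuous fun t : ℝ => Real.exp (θ * t)).aestronglyMeasurable
    · rw [hasFiniteIntegral_iff_norm]
      have : ∀ t : ℝ, ENNReal.ofReal ‖Real.exp (θ * t)‖ = ENNReal.ofReal (Real.exp (θ * t)) := by
        intro t; rw [Real.norm_eq_abs, Real.abs_exp]
      simp_rw [this, hLT θ hθ]
      exact ENNReal.ofReal_lt_top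
  -- the Laplace transform as a complex function
  set L : ℂ → ℂ := fun z => ∫ t, Complex.exp (z * t) ∂μ with hLdef
  have hLreal : ∀ θ : ℝ, θ < l →
      L ↑θ = ↑((1 - r + r * Real.exp θ) ^ x * (l / (l - θ)) ^ y) := by
    intro θ hθ
    have h1 : ∀ t : ℝ, Complex.exp ((θ:ℂ) * t) = ((Real.exp (θ * t) : ℝ) : ℂ) := by
      intro t
      rw [← Complex.ofReal_mul, Complex.ofReal_exp]
    have h2 : L ↑θ = ((∫ t, Real.exp (θ * t) ∂μ : ℝ) : ℂ) := by
      rw [hLdef]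
      simp only [h1]
      exact integral_ofReal
    rw [h2]
    congr 1
    rw [integral_eq_lintegral_of_nonneg_ae (.of_forall fun t => (Real.exp_pos _).le)
      (by fun_prop : Continuous fun t : ℝ => Real.exp (θ * t)).aestronglyMeasurable,
      hLT θ hθ, ENNReal.toReal_ofReal (hC θ hθ).le]
  set U : Set ℂ := {z : ℂ | z.re < l} with hUdef
  have hUopen : IsOpen U := isOpen_lt Complex.continuous_re continuous_const
  have hUconn : IsPreconnected U := (convex_halfSpace_re_lt l).isPreconnected
  have hLanal : AnalyticOnNhd ℂ L U := by
    apply DifferentiableOn.analyticOnNhd _ hUopen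
    intro z hz
    exact (laplace_hasDerivAt hInt hz).differentiableAt.differentiableWithinAt
  -- the correction factor h
  set hh : ℂ → ℂ := fun z => ((1 : ℂ) - z / l) ^ (y : ℂ) with hhdef
  have hbase_re : ∀ z : ℂ, z ∈ U → 0 < ((1 : ℂ) - z / l).re := by
    intro z hz
    have : ((1 : ℂ) - z / l).re = 1 - z.re / l := by
      rw [div_eq_mul_inv, ← Complex.ofReal_inv]
      simp [Complex.mul_re]
      ring
    rw [this]
    have : z.re < l := hz
    rw [sub_pos, div_lt_one hl]
    exact this
  have hhanal : AnalyticOnNhd ℂ hh U := by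
    intro z hz
    apply AnalyticAt.cpow _ analyticAt_const
    · exact Complex.mem_slitPlane_iff.2 (Or.inl (hbase_re z hz))
    · exact (analyticAt_const.sub (analyticAt_id.div analyticAt_const (by
        exact_mod_cast hl.ne')))
  have hhreal : ∀ θ : ℝ, θ < l → hh ↑θ = ↑((1 - θ / l) ^ y) := by
    intro θ hθ
    have hb : (0:ℝ) ≤ 1 - θ / l := by
      rw [sub_nonneg, div_le_one hl]; exact hθ.le
    rw [hhdef]
    have h5 : (1 : ℂ) - (θ:ℂ) / l = ((1 - θ / l : ℝ) : ℂ) := by push_cast; ring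
    simp only [h5, ← Complex.ofReal_cpow hb]
  -- G = L * hh, equal to (1-r+r e^θ)^x on reals
  set G : ℂ → ℂ := fun z => L z * hh z with hGdef
  have hGanal : AnalyticOnNhd ℂ G U := hLanal.mul hhanal
  have hGreal : ∀ θ : ℝ, θ < l → G ↑θ = ↑((1 - r + r * Real.exp θ) ^ x) := by
    intro θ hθ
    rw [hGdef]
    simp only [hLreal θ hθ, hhreal θ hθ, ← Complex.ofReal_mul]
    congr 1
    have hb : (0:ℝ) ≤ 1 - θ / l := by
      rw [sub_nonneg, div_le_one hl]; exact hθ.le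
    have hld : (0:ℝ) < l / (l - θ) := by apply div_pos hl; linarith
    rw [mul_assoc, ← Real.mul_rpow hld.le hb]
    have hθl : (0:ℝ) < l - θ := by linarith
    have : l / (l - θ) * (1 - θ / l) = 1 := by
      rw [show (1 : ℝ) - θ / l = (l - θ) / l by field_simp, div_mul_div_comm,
        mul_comm l (l - θ), div_self (by positivity)]
    rw [this, Real.one_rpow, mul_one]
  -- derivative of G at real points
  have hGderiv : ∀ θ : ℝ, θ < l → deriv G ↑θ =
      ↑((r * Real.exp θ) * x * (1 - r + r * Real.exp θ) ^ (x - 1)) := by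
    intro θ hθ
    have hmem : (↑θ : ℂ) ∈ U := by simpa [hUdef] using hθ
    have hGd : DifferentiableAt ℂ G ↑θ := (hGanal _ hmem).differentiableAt
    have h1 : HasDerivAt (fun t : ℝ => G ↑t) (deriv G ↑θ) θ := hGd.hasDerivAt.comp_ofReal
    have heq : (fun t : ℝ => G ↑t) =ᶠ[nhds θ]
        fun t => (((1 - r + r * Real.exp t) ^ x : ℝ) : ℂ) := by
      filter_upwards [(isOpen_Iio (a := l)).eventually_mem hθ] with t ht
      exact hGreal t ht
    have h2 : HasDerivAt (fun t : ℝ => (((1 - r + r * Real.exp t) ^ x : ℝ) : ℂ))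
        (deriv G ↑θ) θ := h1.congr_of_eventuallyEq heq.symm
    have h3real : HasDerivAt (fun t : ℝ => (1 - r + r * Real.exp t) ^ x)
        ((r * Real.exp θ) * x * (1 - r + r * Real.exp θ) ^ (x - 1)) θ := by
      have hinner : HasDerivAt (fun t : ℝ => 1 - r + r * Real.exp t) (r * Real.exp θ) θ :=
        ((Real.hasDerivAt_exp θ).const_mul r).const_add (1 - r)
      exact hinner.rpow_const (Or.inl (hA θ).ne')
    exact h2.unique h3real.ofReal_comp
  -- the function P encoding the ODE, vanishing on U
  set g : ℂ → ℂ := fun z => 1 - (r:ℂ) + (r:ℂ) * Complex.exp z with hgdef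
  have hexpanal : AnalyticOnNhd ℂ Complex.exp U :=
    Complex.differentiable_exp.differentiableOn.analyticOnNhd hUopen
  have hganal : AnalyticOnNhd ℂ g U :=
    (analyticOnNhd_const.sub analyticOnNhd_const).add (analyticOnNhd_const.mul hexpanal)
  set P : ℂ → ℂ := fun z =>
    deriv G z * g z - (x:ℂ) * ((r:ℂ) * Complex.exp z) * G z with hPdef
  have hPanal : AnalyticOnNhd ℂ P U :=
    (hGanal.deriv.mul hganal).sub
      ((analyticOnNhd_const.mul (analyticOnNhd_const.mul hexpanal)).mul hGanal)
  have hPreal : ∀ θ : ℝ, θ < l → P ↑θ = 0 := by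
    intro θ hθ
    have hgθ : g ↑θ = ((1 - r + r * Real.exp θ : ℝ) : ℂ) := by
      rw [hgdef]; push_cast; ring
    have hxe : (x:ℂ) * ((r:ℂ) * Complex.exp ↑θ) = ↑(x * (r * Real.exp θ)) := by
      push_cast; ring
    rw [hPdef]
    simp only [hGderiv θ hθ, hGreal θ hθ, hgθ, hxe, ← Complex.ofReal_mul,
      ← Complex.ofReal_sub, Complex.ofReal_eq_zero]
    have hAx : (1 - r + r * Real.exp θ) ^ (x-1) * (1 - r + r * Real.exp θ)
        = (1 - r + r * Real.exp θ) ^ x := by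
      rw [← Real.rpow_add_one (hA θ).ne' (x-1)]; ring_nf
    linear_combination (r * Real.exp θ) * x * hAx
  -- identity theorem: P vanishes on all of U
  have h0U : (0:ℂ) ∈ U := by simpa [hUdef] using hl
  have hfreq : ∃ᶠ z in nhdsWithin (0:ℂ) {(0:ℂ)}ᶜ, P z = 0 := by
    have hneg : ∀ n : ℕ, -(1 / (n+1:ℝ)) < 0 := by
      intro n; simp; positivity
    have hseq : Filter.Tendsto (fun n : ℕ => ((-(1 / (n+1:ℝ)) : ℝ) : ℂ)) atTop
        (nhdsWithin 0 {(0:ℂ)}ᶜ) := by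
      rw [tendsto_nhdsWithin_iff]
      constructor
      · have hr' : Filter.Tendsto (fun n : ℕ => -(1 / (n+1:ℝ))) atTop (nhds 0) := by
          simpa only [neg_zero] using (tendsto_one_div_add_atTop_nhds_zero_nat :
            Tendsto (fun n : ℕ => 1 / ((n : ℝ) + 1)) atTop (nhds 0)).neg
        have h6 := (Complex.continuous_ofReal.tendsto 0).comp hr'
        simpa [Function.comp_def] using h6
      · refine .of_forall fun n => ?_
        simp only [Set.mem_compl_iff, Set.mem_singleton_iff, Complex.ofReal_eq_zero]
        exact (hneg n).ne
    exact hseq.frequently (.of_forall fun n => hPreal _ ((hneg n).trans hl))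
  have hPzero : Set.EqOn P 0 U :=
    hPanal.eqOn_zero_of_preconnected_of_frequently_eq_zero hUconn h0U hfreq
  -- the branch point z₀
  set θ₀ : ℝ := Real.log ((1 - r) / r) with hθ₀def
  have hθ₀l : θ₀ < l := by
    have h7 : 1 - r < r * Real.exp l := by
      have h8 := hR
      rw [div_mul_eq_mul_div, lt_div_iff₀ hr1'] at h8
      linarith
    have h9 : (1 - r) / r < Real.exp l := by
      rw [div_lt_iff₀ hr0]; nlinarith
    calc θ₀ < Real.log (Real.exp l) :=
          Real.log_lt_log (div_pos hr1' hr0) h9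
      _ = l := Real.log_exp l
  set z₀ : ℂ := (θ₀ : ℂ) + Real.pi * Complex.I with hz₀def
  have hz₀U : z₀ ∈ U := by
    have : z₀.re = θ₀ := by simp [hz₀def]
    show z₀.re < l
    rw [this]; exact hθ₀l
  have hexpz₀ : Complex.exp z₀ = -((((1 - r) / r : ℝ)) : ℂ) := by
    rw [hz₀def, Complex.exp_add, Complex.exp_pi_mul_I, ← Complex.ofReal_exp,
      Real.exp_log (div_pos hr1' hr0)]
    ring
  have hrC : (r : ℂ) ≠ 0 := by exact_mod_cast hr0.ne'
  have hgz₀ : g z₀ = 0 := by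
    have h12 : g z₀ = 1 - (r:ℂ) + r * Complex.exp z₀ := rfl
    rw [h12, hexpz₀]
    push_cast
    field_simp
    ring
  have hrexpz₀ne : (r:ℂ) * Complex.exp z₀ ≠ 0 := mul_ne_zero hrC (Complex.exp_ne_zero _)
  have hGz₀ : AnalyticAt ℂ G z₀ := hGanal _ hz₀U
  rcases eq_or_ne (analyticOrderAt G z₀) ⊤ with htop | hne
  · -- G ≡ 0 near z₀, hence on U, contradicting G 0 = 1
    have hev : ∀ᶠ z in nhds z₀, G z = 0 := analyticOrderAt_eq_top.1 htop
    have hzero : Set.EqOn G 0 U :=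
      hGanal.eqOn_zero_of_preconnected_of_frequently_eq_zero hUconn hz₀U
        ((hev.filter_mono nhdsWithin_le_nhds).frequently)
    have hG1 : G ((0:ℝ) : ℂ) = ((((1 - r + r * Real.exp 0) ^ x : ℝ)) : ℂ) := hGreal 0 hl
    rw [Real.exp_zero] at hG1
    have : G (0:ℂ) = 1 := by
      rw [show ((0:ℝ):ℂ) = (0:ℂ) by norm_num] at hG1
      rw [hG1]
      norm_num
    rw [hzero h0U] at this
    simp at this
  · -- G vanishes to finite order n at z₀; conclude x = n
    obtain ⟨n, hn⟩ := WithTop.ne_top_iff_exists.1 hne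
    obtain ⟨u, hu_an, hu0, hu_eq⟩ := (hGz₀.analyticOrderAt_eq_natCast (n := n)).1 hn.symm
    simp only [smul_eq_mul] at hu_eq
    have hu_ev : ∀ᶠ z in nhds z₀, AnalyticAt ℂ u z := hu_an.eventually_analyticAt
    have hderiv_ev : ∀ᶠ z in nhds z₀, deriv G z =
        ↑n * (z - z₀) ^ (n-1) * u z + (z - z₀)^n * deriv u z := by
      filter_upwards [hu_eq.eventually_nhds, hu_ev] with z hz hz_an
      have h1 : HasDerivAt (fun w : ℂ => (w - z₀)^n) (↑n * (z - z₀)^(n-1) * 1) z :=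
        ((hasDerivAt_id z).sub_const z₀).pow n
      have h2 : HasDerivAt u (deriv u z) z := hz_an.differentiableAt.hasDerivAt
      have hF : HasDerivAt (fun w => (w - z₀)^n * u w)
          (↑n * (z - z₀)^(n-1) * u z + (z - z₀)^n * deriv u z) z := by
        have h3 := h1.mul h2; rw [mul_one] at h3; exact h3
      rw [Filter.EventuallyEq.deriv_eq hz]
      exact hF.deriv
    have hPev : ∀ᶠ z in nhds z₀, P z = 0 :=
      (hUopen.eventually_mem hz₀U).mono fun z hz => hPzero hz
    -- key identity on a punctured neighborhood
    have hkey : ∀ᶠ z in nhdsWithin z₀ {z₀}ᶜ,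
        (↑n * u z + (z - z₀) * deriv u z) * (g z / (z - z₀))
          = (x:ℂ) * ((r:ℂ) * Complex.exp z) * u z := by
      filter_upwards [eventually_nhdsWithin_of_eventually_nhds
        (hderiv_ev.and (hPev.and hu_eq)), self_mem_nhdsWithin] with z hz hz'
      obtain ⟨e1, e2, e3⟩ := hz
      have hzne : z - z₀ ≠ 0 := sub_ne_zero.2 hz'
      rw [hPdef] at e2
      simp only [sub_eq_zero] at e2
      rw [e1, e3] at e2
      rcases n with _ | m
      · simp only [Nat.cast_zero, zero_mul, pow_zero, one_mul, zero_add] at e2 ⊢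
        rw [mul_comm (z - z₀) (deriv u z), mul_assoc, mul_div_cancel₀ _ hzne]
        exact e2
      · have hpm : (z - z₀) ^ (m + 1) ≠ 0 := pow_ne_zero _ hzne
        apply mul_right_cancel₀ hpm
        have hd : g z / (z - z₀) * (z - z₀) ^ (m + 1) = g z * (z - z₀) ^ m := by
          rw [pow_succ]
          field_simp
        calc (↑(m+1) * u z + (z - z₀) * deriv u z) * (g z / (z - z₀)) * (z - z₀)^(m+1)
            = (↑(m+1) * u z + (z - z₀) * deriv u z) * (g z * (z - z₀)^m) := by
              rw [mul_assoc, hd]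
          _ = (↑(m+1) * (z - z₀) ^ (m+1-1) * u z + (z - z₀)^(m+1) * deriv u z) * g z := by
              simp only [Nat.add_sub_cancel]
              ring
          _ = ↑x * (↑r * Complex.exp z) * ((z - z₀) ^ (m+1) * u z) := e2
          _ = ↑x * (↑r * Complex.exp z) * u z * (z - z₀)^(m+1) := by ring
    -- limits along the punctured neighborhood
    have hg_deriv : HasDerivAt g ((r:ℂ) * Complex.exp z₀) z₀ := by
      have h1 : HasDerivAt (fun z : ℂ => Complex.exp z) (Complex.exp z₀) z₀ := by
        simpa using (hasDerivAt_id z₀).cexp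
      exact ((h1.const_mul (r:ℂ)).const_add (1 - (r:ℂ)))
    have hslope : Filter.Tendsto (fun z => g z / (z - z₀)) (nhdsWithin z₀ {z₀}ᶜ)
        (nhds ((r:ℂ) * Complex.exp z₀)) := by
      have h1 := hasDerivAt_iff_tendsto_slope.1 hg_deriv
      refine h1.congr ?_
      intro z
      rw [slope_def_field, hgz₀, sub_zero]
    have hcontu : ContinuousAt u z₀ := hu_an.continuousAt
    have hcontu' : ContinuousAt (deriv u) z₀ := by
      have h1 : ContinuousAt (fderiv ℂ u) z₀ := hu_an.fderiv.continuousAt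
      have h2 : ContinuousAt (fun z => (fderiv ℂ u z) 1) z₀ :=
        ((ContinuousLinearMap.apply ℂ ℂ (1:ℂ)).continuous.continuousAt).comp h1
      simpa [fderiv_apply_one_eq_deriv] using h2
    have T1 : Filter.Tendsto (fun z => ↑n * u z + (z - z₀) * deriv u z)
        (nhdsWithin z₀ {z₀}ᶜ) (nhds (↑n * u z₀)) := by
      have h1 : ContinuousAt (fun z => ↑n * u z + (z - z₀) * deriv u z) z₀ :=
        (continuousAt_const.mul hcontu).add
          (((continuousAt_id.sub continuousAt_const)).mul hcontu')
      have h2 := h1.tendsto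
      simp only [sub_self, zero_mul, add_zero] at h2
      exact h2.mono_left nhdsWithin_le_nhds
    have T : Filter.Tendsto (fun z => (↑n * u z + (z - z₀) * deriv u z) * (g z / (z - z₀)))
        (nhdsWithin z₀ {z₀}ᶜ) (nhds (↑n * u z₀ * ((r:ℂ) * Complex.exp z₀))) := T1.mul hslope
    have T2 : Filter.Tendsto (fun z => (x:ℂ) * ((r:ℂ) * Complex.exp z) * u z)
        (nhdsWithin z₀ {z₀}ᶜ) (nhds ((x:ℂ) * ((r:ℂ) * Complex.exp z₀) * u z₀)) := by
      have h1 : ContinuousAt (fun z => (x:ℂ) * ((r:ℂ) * Complex.exp z) * u z) z₀ :=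
        ((continuousAt_const.mul (continuousAt_const.mul Complex.continuous_exp.continuousAt)).mul hcontu)
      exact h1.tendsto.mono_left nhdsWithin_le_nhds
    have heq := tendsto_nhds_unique (T.congr' hkey) T2
    have hfactor : ((↑n : ℂ) - ↑x) * (u z₀ * ((r:ℂ) * Complex.exp z₀)) = 0 := by
      linear_combination heq
    have hnx : (↑n : ℂ) = (x : ℂ) := by
      rcases mul_eq_zero.1 hfactor with h | h
      · exact sub_eq_zero.1 h
      · exact absurd h (mul_ne_zero hu0 hrexpz₀ne)
    have hxn : x = (n : ℝ) := by
      have : ((x:ℝ) : ℂ) = (((n:ℝ)) : ℂ) := by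
        rw [← hnx]; push_cast; ring
      exact_mod_cast this
    exact hxnotint n (by rw [hxn]; push_cast; ring)
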